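/- Let α, β > 0, M > 0, and for c ≥ 0 and b > a define the function Φ(c) := (βM²/4)(b−a)³ + βM(b−a)²c + β(b−a)c² − 2α(c + M(b−a)/2)^{1/2}. If β²M³(b−a)⁵ > 64α², then Φ(c) > 0 for every c ≥ 0. -/
import Mathlib


theorem stmt15 (α β M a b : ℝ) (hα : 0 < α) (hβ : 0 < β) (hM : 0 < M)
    (hab : a < b) (h : 64*α^2 < β^2*M^3*(b-a)^5) :
    ∀ c : ℝ, 0 ≤ c →
      0 < β*M^2/4*(b-a)^3 + β*M*(b-a)^2*c + β*(b-a)*c^2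
            - 2*α*Real.sqrt (c + M*(b-a)/2) := by
  intro c hc
  have hL : 0 < b - a := sub_pos.mpr hab
  have ht : 0 < c + M*(b-a)/2 := by positivity
  set s := Real.sqrt (c + M*(b-a)/2) with hsdef
  have hs : 0 < s := Real.sqrt_pos.mpr ht
  have hs2 : s^2 = c + M*(b-a)/2 := Real.sq_sqrt ht.le
  have hc' : c = s^2 - M*(b-a)/2 := by linarith
  have hp : (M*(b-a)/2)^3 ≤ (c + M*(b-a)/2)^3 :=
    pow_le_pow_left₀ (by positivity) (by linarith) 3
  have h7 : β^2*(b-a)^2*(M*(b-a)/2)^3 ≤ β^2*(b-a)^2*(c+M*(b-a)/2)^3 :=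
    mul_le_mul_of_nonneg_left hp (by positivity)
  have hsq : (2*α)^2 < (β*(b-a)*s^3)^2 := by
    have h6 : (β*(b-a)*s^3)^2 = β^2*(b-a)^2*(s^2)^3 := by ring
    rw [h6, hs2]
    nlinarith [h7, pow_pos hα 2]
  have key : 2*α < β*(b-a)*s^3 := by
    have h3 : 0 < β*(b-a)*s^3 := by positivity
    nlinarith [hsq]
  have hfin : 0 < s * (β*(b-a)*s^3 - 2*α) :=
    mul_pos hs (by linarith)
  calc (0:ℝ) < s * (β*(b-a)*s^3 - 2*α) := hfin
    _ = β*M^2/4*(b-a)^3 + β*M*(b-a)^2*c + β*(b-a)*c^2 - 2*α*s := by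
        rw [hc']; ring
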